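/- arXiv:1803.00354 — 3 statements merged into one kernel-verified Lean document; each statement's English description precedes it below -/
import Mathlib

section
/- Define a sequence of functions g_n : [0,\infty) \to [0,\infty) by g_0(x) = 1 and g_{n+1}(x) = \int_0^x g_n(y) dy + \int_x^\infty e^{x-y} g_n(y) dy. Then g_n(x) = \sum_{k=0}^n c_{k,n} x^k / k!, where c_{k,n} = ((k+1)/(n+1)) binomial(2n-k,n) are the Catalan triangle numbers. -/
open MeasureTheory

namespace CatalanAux

open Finset

def myc (k n : ℕ) : ℕ := (2*n-k).choose n - (2*n-k).choose (n+1)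

lemma key_id (k n : ℕ) (h : k ≤ n) :
    (2*n-k).choose (n+1) * (n+1) = (2*n-k).choose n * (n - k) := by
  have h1 : 2*n - k - n = n - k := by omega
  rw [Nat.choose_succ_right_eq, h1]

lemma choose_le (k n : ℕ) (h : k ≤ n) :
    (2*n-k).choose (n+1) ≤ (2*n-k).choose n := by
  have := key_id k n h
  have h2 : (2*n-k).choose n * (n-k) ≤ (2*n-k).choose n * (n+1) :=
    Nat.mul_le_mul_left _ (by omega)
  have h3 : (2*n-k).choose (n+1) * (n+1) ≤ (2*n-k).choose n * (n+1) := by omega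
  exact Nat.le_of_mul_le_mul_right h3 (by omega)

lemma myc_cast (k n : ℕ) (h : k ≤ n) :
    (myc k n : ℝ) = ((k:ℝ)+1) / ((n:ℝ)+1) * ((2*n-k).choose n : ℝ) := by
  have hle := choose_le k n h
  have hid := key_id k n h
  rw [myc, Nat.cast_sub hle, div_mul_eq_mul_div, eq_div_iff (by positivity)]
  have : ((2*n-k).choose (n+1) : ℝ) * ((n:ℝ)+1) = ((2*n-k).choose n : ℝ) * ((n:ℝ) - k) := by
    have := congrArg (fun m : ℕ => (m : ℝ)) hid
    push_cast at this
    rw [this, Nat.cast_sub h]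
  nlinarith [this]

lemma myc_rec (j n : ℕ) (h : j ≤ n + 1) :
    myc j (n+1) = ∑ l ∈ Icc (j-1) n, myc l n := by
  have hsum : ∀ r a : ℕ, a ≤ n → n ≤ r →
      ∑ l ∈ Icc a n, (2*n-l).choose r = (2*n-a+1).choose (r+1) := by
    intro r a ha hr
    have h1 : ∑ l ∈ Icc a n, (2*n-l).choose r = ∑ m ∈ Icc n (2*n-a), m.choose r := by
      refine Finset.sum_nbij' (fun l => 2*n - l) (fun m => 2*n - m) ?_ ?_ ?_ ?_ ?_
      · intro l hl; simp only [mem_Icc] at *; omega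
      · intro m hm; simp only [mem_Icc] at *; omega
      · intro l hl; simp only [mem_Icc] at hl ⊢; omega
      · intro m hm; simp only [mem_Icc] at hm ⊢; omega
      · intro l hl; rfl
    have h2 : ∑ m ∈ Icc n (2*n-a), m.choose r = ∑ m ∈ Icc r (2*n-a), m.choose r := by
      symm
      refine Finset.sum_subset (Finset.Icc_subset_Icc_left hr) ?_
      intro m hm hm'
      simp only [mem_Icc] at *
      exact Nat.choose_eq_zero_of_lt (by omega)
    rw [h1, h2, Nat.sum_Icc_choose]
  have hsub : ∀ l ∈ Icc (j-1) n, (myc l n : ℤ)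
      = ((2*n-l).choose n : ℤ) - ((2*n-l).choose (n+1) : ℤ) := by
    intro l hl
    simp only [mem_Icc] at hl
    rw [myc, Nat.cast_sub (choose_le l n hl.2)]
  have e1 : (∑ l ∈ Icc (j-1) n, (((2*n-l).choose n : ℕ) : ℤ))
      = (((2*n-(j-1)+1).choose (n+1) : ℕ) : ℤ) := by
    exact_mod_cast congrArg (fun m : ℕ => (m : ℤ)) (hsum n (j-1) (by omega) le_rfl)
  have e2 : (∑ l ∈ Icc (j-1) n, (((2*n-l).choose (n+1) : ℕ) : ℤ))
      = (((2*n-(j-1)+1).choose (n+2) : ℕ) : ℤ) := by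
    exact_mod_cast congrArg (fun m : ℕ => (m : ℤ)) (hsum (n+1) (j-1) (by omega) (by omega))
  have hz : (myc j (n+1) : ℤ) = ∑ l ∈ Icc (j-1) n, (myc l n : ℤ) := by
    rw [Finset.sum_congr rfl hsub, Finset.sum_sub_distrib, e1, e2,
        myc, Nat.cast_sub (choose_le j (n+1) h)]
    rcases Nat.eq_zero_or_pos j with rfl | hj
    · have p1 : (2*(n+1)-0).choose (n+1) = (2*n+1).choose n + (2*n+1).choose (n+1) := by
        rw [show 2*(n+1)-0 = (2*n+1)+1 by omega, Nat.choose_succ_succ']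
      have p2 : (2*(n+1)-0).choose (n+2) = (2*n+1).choose (n+1) + (2*n+1).choose (n+2) := by
        rw [show 2*(n+1)-0 = (2*n+1)+1 by omega, Nat.choose_succ_succ']
      have p3 := Nat.choose_symm_half n
      have q : 2*n-(0-1)+1 = 2*n+1 := by omega
      rw [q, p1, p2, p3]
      push_cast
      ring
    · have hj1 : 2*n - (j-1) + 1 = 2*(n+1) - j := by omega
      rw [hj1]
  exact_mod_cast hz

noncomputable def Q (k : ℕ) (x : ℝ) : ℝ :=
  ∑ j ∈ range (k+1), ((k.factorial : ℝ) / (j.factorial : ℝ)) * x ^ j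

lemma Q_deriv (k : ℕ) (x y : ℝ) :
    HasDerivAt (fun y => -(Real.exp (x - y) * Q k y)) (Real.exp (x - y) * y ^ k) y := by
  have he : HasDerivAt (fun y : ℝ => Real.exp (x - y)) (-Real.exp (x - y)) y := by
    have h1 : HasDerivAt (fun y : ℝ => x - y) (-1) y := (hasDerivAt_id y).const_sub x
    have h2 := (Real.hasDerivAt_exp (x - y)).comp y h1
    rw [mul_neg_one] at h2
    exact h2
  have hq : HasDerivAt (Q k) (∑ j ∈ range (k+1),
      ((k.factorial : ℝ) / (j.factorial : ℝ)) * ((j : ℝ) * y ^ (j-1))) y := by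
    apply HasDerivAt.fun_sum
    intro j _
    exact (hasDerivAt_pow j y).const_mul _
  have hmul := he.mul hq
  have halg : Q k y - ∑ j ∈ range (k+1),
      ((k.factorial : ℝ) / (j.factorial : ℝ)) * ((j : ℝ) * y ^ (j-1)) = y ^ k := by
    rw [Q, Finset.sum_range_succ,
      Finset.sum_range_succ' (fun j => ((k.factorial : ℝ) / (j.factorial : ℝ)) * ((j : ℝ) * y ^ (j-1)))]
    have hterm : ∀ i, ((k.factorial : ℝ) / ((i+1).factorial : ℝ)) * (((i+1 : ℕ) : ℝ) * y ^ (i+1-1))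
        = ((k.factorial : ℝ) / (i.factorial : ℝ)) * y ^ i := by
      intro i
      have : ((i+1).factorial : ℝ) = ((i:ℝ)+1) * (i.factorial : ℝ) := by
        rw [Nat.factorial_succ]; push_cast; ring
      rw [this]
      have h1 : (i.factorial : ℝ) ≠ 0 := Nat.cast_ne_zero.mpr i.factorial_ne_zero
      have h2 : ((i:ℝ)+1) ≠ 0 := by positivity
      field_simp
      rw [show i + 1 - 1 = i by omega]
      push_cast
      ring
    rw [Finset.sum_congr rfl (fun i _ => hterm i)]
    have : ((k.factorial : ℝ) / (k.factorial : ℝ)) = 1 := by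
      exact div_self (Nat.cast_ne_zero.mpr k.factorial_ne_zero)
    rw [this]
    simp
  have : Real.exp (x - y) * y ^ k
      = -((-Real.exp (x - y)) * Q k y + Real.exp (x - y) * (∑ j ∈ range (k+1),
      ((k.factorial : ℝ) / (j.factorial : ℝ)) * ((j : ℝ) * y ^ (j-1)))) := by
    rw [← halg]; ring
  rw [this]
  exact hmul.neg

lemma Q_tendsto (k : ℕ) (x : ℝ) :
    Filter.Tendsto (fun y => -(Real.exp (x - y) * Q k y)) Filter.atTop (nhds 0) := by
  have h : ∀ y : ℝ, -(Real.exp (x - y) * Q k y)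
      = -(Real.exp x * ∑ j ∈ range (k+1), ((k.factorial : ℝ) / (j.factorial : ℝ)) * (y ^ j * Real.exp (-y))) := by
    intro y
    rw [Q, Finset.mul_sum, Finset.mul_sum, Real.exp_sub, Real.exp_neg]
    congr 1
    refine Finset.sum_congr rfl fun j _ => ?_
    rw [div_eq_mul_inv]
    ring
  simp only [h]
  have : Filter.Tendsto (fun y : ℝ => ∑ j ∈ range (k+1),
      ((k.factorial : ℝ) / (j.factorial : ℝ)) * (y ^ j * Real.exp (-y))) Filter.atTop (nhds 0) := by
    have := fun j : ℕ => (Real.tendsto_pow_mul_exp_neg_atTop_nhds_zero j).const_mul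
      ((k.factorial : ℝ) / (j.factorial : ℝ))
    have h0 : (0:ℝ) = ∑ j ∈ range (k+1), ((k.factorial : ℝ) / (j.factorial : ℝ)) * 0 := by simp
    rw [h0]
    exact tendsto_finset_sum _ fun j _ => this j
  have := (this.const_mul (Real.exp x)).neg
  simpa using this

lemma exp_pow_integrableOn (k : ℕ) (x : ℝ) (hx : 0 ≤ x) :
    IntegrableOn (fun y => Real.exp (x - y) * y ^ k) (Set.Ioi x) := by
  refine integrableOn_Ioi_deriv_of_nonneg' (g := fun y => -(Real.exp (x - y) * Q k y))
    (fun y _ => Q_deriv k x y) (fun y hy => ?_) (Q_tendsto k x)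
  have : (0:ℝ) ≤ y := le_trans hx (le_of_lt hy)
  positivity

lemma exp_pow_integral (k : ℕ) (x : ℝ) (hx : 0 ≤ x) :
    ∫ y in Set.Ioi x, Real.exp (x - y) * y ^ k = Q k x := by
  rw [integral_Ioi_of_hasDerivAt_of_nonneg' (fun y _ => Q_deriv k x y)
    (fun y hy => by
      have : (0:ℝ) ≤ y := le_trans hx (le_of_lt hy)
      positivity) (Q_tendsto k x)]
  simp

lemma swap_sum (n : ℕ) (f : ℕ → ℕ → ℝ) :
    ∑ k ∈ range (n+1), ∑ j ∈ range (k+1), f k j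
      = ∑ j ∈ range (n+1), ∑ k ∈ Icc j n, f k j := by
  induction n with
  | zero => simp
  | succ n ih =>
    rw [Finset.sum_range_succ, ih, Finset.sum_range_succ (fun j => ∑ k ∈ Icc j (n+1), f k j)]
    have h1 : ∀ j ∈ range (n+1), ∑ k ∈ Icc j (n+1), f k j
        = ∑ k ∈ Icc j n, f k j + f (n+1) j := by
      intro j hj
      rw [← Finset.sum_Icc_succ_top (by simp at hj; omega)]
    rw [Finset.sum_congr rfl h1, Finset.sum_add_distrib, Icc_self, Finset.sum_singleton,
      Finset.sum_range_succ (fun j => f (n+1) j)]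
    ring

end CatalanAux

open CatalanAux Finset MeasureTheory in
/-- If `g 0 ≡ 1` and `g (n+1) x = ∫_0^x g n + ∫_x^∞ e^{x-y} g n y dy` on `[0,∞)`,
then `g n x = ∑_{k=0}^n c_{k,n} x^k / k!`, where
`c_{k,n} = ((k+1)/(n+1)) * choose (2n-k) n` are the Catalan triangle numbers. -/
theorem g_eq_catalan_expansion
    (g : ℕ → ℝ → ℝ)
    (hg0 : ∀ x : ℝ, 0 ≤ x → g 0 x = 1)
    (hgrec : ∀ (n : ℕ) (x : ℝ), 0 ≤ x →
      g (n + 1) x = (∫ y in (0:ℝ)..x, g n y) + ∫ y in Set.Ioi x, Real.exp (x - y) * g n y) :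
    ∀ (n : ℕ) (x : ℝ), 0 ≤ x →
      g n x = ∑ k ∈ Finset.range (n + 1),
        (((k : ℝ) + 1) / ((n : ℝ) + 1)) * (Nat.choose (2 * n - k) n : ℝ) * x ^ k /
          (Nat.factorial k : ℝ) := by
  have main : ∀ (n : ℕ) (x : ℝ), 0 ≤ x →
      g n x = ∑ k ∈ range (n+1), (myc k n : ℝ) * x ^ k / (k.factorial : ℝ) := by
    intro n
    induction n with
    | zero => intro x hx; rw [hg0 x hx]; simp [myc]
    | succ n ih =>
      intro x hx
      rw [hgrec n x hx]
      -- first integral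
      have hA : (∫ y in (0:ℝ)..x, g n y)
          = ∑ k ∈ range (n+1), (myc k n : ℝ) * x ^ (k+1) / ((k+1).factorial : ℝ) := by
        have h1 : (∫ y in (0:ℝ)..x, g n y)
            = ∫ y in (0:ℝ)..x, ∑ k ∈ range (n+1), (myc k n : ℝ) * y ^ k / (k.factorial : ℝ) := by
          apply intervalIntegral.integral_congr
          intro y hy
          rw [Set.uIcc_of_le hx] at hy
          exact ih y hy.1
        rw [h1, intervalIntegral.integral_finset_sum (fun k _ =>
          (by fun_prop : Continuous fun y : ℝ => (myc k n : ℝ) * y ^ k / (k.factorial : ℝ)).intervalIntegrable 0 x)]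
        refine Finset.sum_congr rfl fun k _ => ?_
        rw [intervalIntegral.integral_div, intervalIntegral.integral_const_mul, integral_pow]
        have hfac : (((k+1).factorial : ℝ)) = ((k:ℝ)+1) * (k.factorial : ℝ) := by
          rw [Nat.factorial_succ]; push_cast; ring
        rw [hfac, zero_pow (Nat.succ_ne_zero k)]
        have h2 : (k.factorial : ℝ) ≠ 0 := Nat.cast_ne_zero.mpr k.factorial_ne_zero
        have h3 : ((k:ℝ)+1) ≠ 0 := by positivity
        field_simp
        rw [sub_zero]
      -- second integral
      have hB : (∫ y in Set.Ioi x, Real.exp (x - y) * g n y)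
          = ∑ k ∈ range (n+1), ∑ j ∈ range (k+1), (myc k n : ℝ) * x ^ j / (j.factorial : ℝ) := by
        have h1 : (∫ y in Set.Ioi x, Real.exp (x - y) * g n y)
            = ∫ y in Set.Ioi x, ∑ k ∈ range (n+1),
                ((myc k n : ℝ) / (k.factorial : ℝ)) * (Real.exp (x - y) * y ^ k) := by
          apply setIntegral_congr_fun measurableSet_Ioi
          intro y hy
          dsimp only
          rw [ih y (le_trans hx (le_of_lt hy)), Finset.mul_sum]
          exact Finset.sum_congr rfl fun k _ => by ring
        rw [h1, integral_finset_sum _ (fun k _ =>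
          (exp_pow_integrableOn k x hx).const_mul _)]
        refine Finset.sum_congr rfl fun k _ => ?_
        rw [integral_const_mul, exp_pow_integral k x hx, Q, Finset.mul_sum]
        refine Finset.sum_congr rfl fun j hj => ?_
        have h2 : (k.factorial : ℝ) ≠ 0 := Nat.cast_ne_zero.mpr k.factorial_ne_zero
        have h3 : (j.factorial : ℝ) ≠ 0 := Nat.cast_ne_zero.mpr j.factorial_ne_zero
        field_simp
      rw [hA, hB, swap_sum n (fun k j => (myc k n : ℝ) * x ^ j / (j.factorial : ℝ))]
      -- now rewrite target coefficients
      have hT : ∑ j ∈ range (n+2), (myc j (n+1) : ℝ) * x ^ j / (j.factorial : ℝ)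
          = ∑ j ∈ range (n+2),
              (((if 1 ≤ j then (myc (j-1) n : ℝ) else 0) * x ^ j / (j.factorial : ℝ))
                + (∑ l ∈ Icc j n, (myc l n : ℝ)) * x ^ j / (j.factorial : ℝ)) := by
        refine Finset.sum_congr rfl fun j hj => ?_
        simp only [Finset.mem_range] at hj
        have hrec : (myc j (n+1) : ℝ) = ∑ l ∈ Icc (j-1) n, (myc l n : ℝ) := by
          rw [myc_rec j n (by omega)]; push_cast; rfl
        rw [hrec]
        rcases Nat.eq_zero_or_pos j with rfl | hj1
        · simp
        · have hsplit : Icc (j-1) n = insert (j-1) (Icc j n) := by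
            ext a; simp only [Finset.mem_Icc, Finset.mem_insert]; omega
          rw [hsplit, Finset.sum_insert (by simp only [Finset.mem_Icc]; omega), if_pos (show 1 ≤ j by omega)]
          ring
      rw [hT, Finset.sum_add_distrib]
      congr 1
      · rw [Finset.sum_range_succ' (fun j => (if 1 ≤ j then (myc (j-1) n : ℝ) else 0) * x ^ j / (j.factorial : ℝ))]
        simp only [Nat.le_add_left, if_true, Nat.add_sub_cancel, le_zero_iff, if_neg one_ne_zero.symm]
        simp
      · rw [Finset.sum_range_succ (fun j => (∑ l ∈ Icc j n, (myc l n : ℝ)) * x ^ j / (j.factorial : ℝ))]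
        simp only [show Icc (n+1) n = ∅ from Finset.Icc_eq_empty (by omega), Finset.sum_empty,
          zero_mul, zero_div, add_zero]
        refine Finset.sum_congr rfl fun j _ => ?_
        rw [Finset.sum_mul, Finset.sum_div]
  intro n x hx
  rw [main n x hx]
  refine Finset.sum_congr rfl fun k hk => ?_
  simp only [Finset.mem_range] at hk
  rw [myc_cast k n (by omega)]
end

section
/- Let g(x) = (x+2)e^{x/2} and let T be the integral operator T(h)(x) = \int_0^x h(y) dy + \int_x^\infty e^{x-y} h(y) dy. Then T(g) = 4g, i.e., g is an eigenfunction of T with eigenvalue 4. -/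
open MeasureTheory

lemma deriv1 (x y : ℝ) :
    HasDerivAt (fun y : ℝ => -(2 * y + 8) * Real.exp (x - y / 2))
      (Real.exp (x - y) * ((y + 2) * Real.exp (y / 2))) y := by
  have h1 : HasDerivAt (fun y : ℝ => -(2 * y + 8)) (-2) y := by
    simpa using (((hasDerivAt_id y).const_mul 2).add_const 8).fun_neg
  have h2 : HasDerivAt (fun y : ℝ => Real.exp (x - y / 2))
      (Real.exp (x - y / 2) * (-(1/2))) y := by
    exact (((hasDerivAt_id y).div_const 2).const_sub x).exp
  have := h1.fun_mul h2
  refine this.congr_deriv ?_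
  rw [show x - y = x - y / 2 + (-(y/2)) by ring, Real.exp_add,
    show (y:ℝ)/2 = -(-(y/2)) by ring, Real.exp_neg]
  have hpos := Real.exp_ne_zero (-(y/2))
  field_simp
  ring

lemma deriv2 (y : ℝ) :
    HasDerivAt (fun y : ℝ => 2 * y * Real.exp (y / 2))
      ((y + 2) * Real.exp (y / 2)) y := by
  have h1 : HasDerivAt (fun y : ℝ => 2 * y) 2 y := by
    simpa using (hasDerivAt_id y).const_mul 2
  have h2 : HasDerivAt (fun y : ℝ => Real.exp (y / 2))
      (Real.exp (y / 2) * (1/2)) y := ((hasDerivAt_id y).div_const 2).exp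
  have := h1.fun_mul h2
  refine this.congr_deriv ?_
  ring

/-- The function `g x = (x+2) e^{x/2}` is an eigenfunction with eigenvalue `4` of the
integral operator `T h x = ∫_0^x h(y) dy + ∫_x^∞ e^{x-y} h(y) dy`. -/
theorem eigenfunction_of_T (x : ℝ) (hx : 0 ≤ x) :
    (∫ y in (0:ℝ)..x, (y + 2) * Real.exp (y / 2)) +
      (∫ y in Set.Ioi x, Real.exp (x - y) * ((y + 2) * Real.exp (y / 2))) =
      4 * ((x + 2) * Real.exp (x / 2)) := by
  have I1 : (∫ y in (0:ℝ)..x, (y + 2) * Real.exp (y / 2)) = 2 * x * Real.exp (x / 2) := by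
    rw [intervalIntegral.integral_eq_sub_of_hasDerivAt (fun y _ => deriv2 y)]
    · simp
    · exact (Continuous.intervalIntegrable (by continuity) _ _)
  have I2 : (∫ y in Set.Ioi x, Real.exp (x - y) * ((y + 2) * Real.exp (y / 2)))
      = (2 * x + 8) * Real.exp (x / 2) := by
    have hcont : ContinuousWithinAt (fun y : ℝ => -(2 * y + 8) * Real.exp (x - y / 2))
        (Set.Ici x) x := (Continuous.continuousWithinAt (by continuity))
    have hderiv : ∀ y ∈ Set.Ioi x, HasDerivAt (fun y : ℝ => -(2 * y + 8) * Real.exp (x - y / 2))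
        (Real.exp (x - y) * ((y + 2) * Real.exp (y / 2))) y := fun y _ => deriv1 x y
    have hnonneg : ∀ y ∈ Set.Ioi x, 0 ≤ Real.exp (x - y) * ((y + 2) * Real.exp (y / 2)) := by
      intro y hy
      have hy' : (0:ℝ) < y + 2 := by have := hx.trans_lt hy; linarith
      positivity
    have htend : Filter.Tendsto (fun y : ℝ => -(2 * y + 8) * Real.exp (x - y / 2))
        Filter.atTop (nhds 0) := by
      have key : Filter.Tendsto (fun t : ℝ => (4 * t + 8) * Real.exp (-t))
          Filter.atTop (nhds 0) := by
        have h1 : Filter.Tendsto (fun t : ℝ => 4 * (t * Real.exp (-t)))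
            Filter.atTop (nhds (4 * 0)) := by
          have := Real.tendsto_pow_mul_exp_neg_atTop_nhds_zero 1
          simpa using this.const_mul 4
        have h2 : Filter.Tendsto (fun t : ℝ => 8 * Real.exp (-t))
            Filter.atTop (nhds (8 * 0)) :=
          (Real.tendsto_exp_neg_atTop_nhds_zero).const_mul 8
        have := h1.add h2
        simp only [mul_zero, add_zero] at this
        convert this using 2 with t
        ring
      have hhalf : Filter.Tendsto (fun y : ℝ => y / 2) Filter.atTop Filter.atTop :=
        Filter.tendsto_id.atTop_div_const two_pos
      have := (key.comp hhalf).const_mul (-(Real.exp x))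
      simp only [mul_zero] at this
      convert this using 2 with y
      simp only [Function.comp]
      rw [show x - y / 2 = x + (-(y/2)) by ring, Real.exp_add]
      ring
    rw [MeasureTheory.integral_Ioi_of_hasDerivAt_of_nonneg hcont hderiv hnonneg htend]
    rw [show x - x / 2 = x / 2 by ring]
    ring
  rw [I1, I2]
  ring
end

section
/- For u > 1/4, F_{n+1}(R) = u^{n+1} \int_0^R g_n(x) dx \ge u^{n+1} 4^n R / (2(n+1)^2), and hence F_n(R) \to \infty as n \to \infty, for every fixed R > 0. -/
open MeasureTheory

/-- For `u > 1/4`, if `F (n+1) R = u^{n+1} ∫_0^R g n x dx` where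
`g n x = ∑_{k=0}^n c_{k,n} x^k / k!` is the Catalan triangle expansion, then
`F (n+1) R ≥ u^{n+1} 4^n R / (2(n+1)²)`, and hence `F n R → ∞` as `n → ∞`,
for every fixed `R > 0`. -/
theorem F_tendsto_atTop (u : ℝ) (hu : 1 / 4 < u) (F : ℕ → ℝ → ℝ)
    (hF : ∀ (n : ℕ) (r : ℝ), 0 ≤ r →
      F (n + 1) r = u ^ (n + 1) * ∫ x in (0:ℝ)..r,
        ∑ k ∈ Finset.range (n + 1),
          (((k : ℝ) + 1) / ((n : ℝ) + 1)) * (Nat.choose (2 * n - k) n : ℝ) * x ^ k /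
            (Nat.factorial k : ℝ))
    (R : ℝ) (hR : 0 < R) :
    (∀ n : ℕ, u ^ (n + 1) * 4 ^ n * R / (2 * ((n : ℝ) + 1) ^ 2) ≤ F (n + 1) R) ∧
      Filter.Tendsto (fun n => F n R) Filter.atTop Filter.atTop := by
  have hu0 : 0 < u := lt_trans (by norm_num) hu
  have key : ∀ n : ℕ, u ^ (n + 1) * 4 ^ n * R / (2 * ((n : ℝ) + 1) ^ 2) ≤ F (n + 1) R := by
    intro n
    rw [hF n R hR.le]
    set c0 : ℝ := (Nat.choose (2 * n) n : ℝ) / ((n : ℝ) + 1) with hc0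
    have hn1 : (0:ℝ) < (n : ℝ) + 1 := by positivity
    have hint : c0 * R ≤ ∫ x in (0:ℝ)..R,
        ∑ k ∈ Finset.range (n + 1),
          (((k : ℝ) + 1) / ((n : ℝ) + 1)) * (Nat.choose (2 * n - k) n : ℝ) * x ^ k /
            (Nat.factorial k : ℝ) := by
      have h1 : c0 * R = ∫ x in (0:ℝ)..R, c0 := by
        rw [intervalIntegral.integral_const, smul_eq_mul]; ring
      rw [h1]
      apply intervalIntegral.integral_mono_on hR.le
      · exact intervalIntegrable_const
      · apply Continuous.intervalIntegrable
        exact continuous_finset_sum _ fun k _ => by fun_prop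
      · intro x hx
        have h0 : (0:ℕ) ∈ Finset.range (n + 1) := Finset.mem_range.mpr n.succ_pos
        have := Finset.single_le_sum (f := fun k : ℕ =>
            (((k : ℝ) + 1) / ((n : ℝ) + 1)) * (Nat.choose (2 * n - k) n : ℝ) * x ^ k /
            (Nat.factorial k : ℝ)) (fun k _ => by
          have hx0 : 0 ≤ x := hx.1
          have h1 : (0:ℝ) ≤ (k : ℝ) + 1 := by positivity
          positivity) h0
        refine le_trans (le_of_eq ?_) this
        simp [hc0, div_eq_mul_inv]
        ring
    have hupos : (0:ℝ) < u ^ (n + 1) := pow_pos hu0 _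
    have hcb : (4:ℝ) ^ n ≤ 2 * ((n:ℝ) + 1) * (Nat.choose (2 * n) n : ℝ) := by
      have := Nat.four_pow_le_two_mul_add_one_mul_central_binom n
      have h2 : (2 * n + 1) * Nat.centralBinom n ≤ (2 * n + 2) * Nat.centralBinom n :=
        Nat.mul_le_mul_right _ (by omega)
      have h3 : 4 ^ n ≤ (2 * n + 2) * Nat.centralBinom n := le_trans this h2
      have := Nat.cast_le (α := ℝ) |>.mpr h3
      push_cast [Nat.centralBinom] at this
      linarith
    have h2 : c0 * ((n:ℝ)+1) = (Nat.choose (2*n) n : ℝ) := by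
      rw [hc0]; field_simp
    calc u ^ (n + 1) * 4 ^ n * R / (2 * ((n : ℝ) + 1) ^ 2)
        ≤ u ^ (n + 1) * (c0 * R) := by
          rw [div_le_iff₀ (by positivity)]
          have key2 : u ^ (n+1) * R * (4:ℝ)^n ≤
              u ^ (n+1) * R * (2 * ((n:ℝ)+1) * (Nat.choose (2*n) n : ℝ)) :=
            mul_le_mul_of_nonneg_left hcb (by positivity)
          have h3 : u ^ (n + 1) * (c0 * R) * (2 * ((n:ℝ) + 1) ^ 2) =
              u ^ (n+1) * R * (2 * ((n:ℝ)+1) * (Nat.choose (2*n) n : ℝ)) := by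
            rw [hc0]; field_simp
          linarith [key2]
      _ ≤ u ^ (n + 1) * (∫ x in (0:ℝ)..R,
        ∑ k ∈ Finset.range (n + 1),
          (((k : ℝ) + 1) / ((n : ℝ) + 1)) * (Nat.choose (2 * n - k) n : ℝ) * x ^ k /
            (Nat.factorial k : ℝ)) := by
          exact mul_le_mul_of_nonneg_left hint hupos.le
  refine ⟨key, ?_⟩
  rw [← Filter.tendsto_add_atTop_iff_nat 1]
  apply Filter.tendsto_atTop_mono key
  -- show u^{n+1} 4^n R / (2(n+1)^2) → ∞
  have h4u : (1:ℝ) < 4 * u := by linarith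
  have hzero : Filter.Tendsto (fun n : ℕ => ((n:ℝ)+1) ^ 2 / (4*u) ^ n) Filter.atTop (nhds 0) := by
    have h := tendsto_pow_const_div_const_pow_of_one_lt 2 h4u
    have h' := (h.comp (Filter.tendsto_add_atTop_nat 1)).const_mul (4*u)
    simp only [mul_zero] at h'
    convert h' using 2 with n
    simp only [Function.comp_apply]
    push_cast
    field_simp
    ring
  have hpos : ∀ n : ℕ, 0 < ((n:ℝ)+1) ^ 2 / (4*u) ^ n := by
    intro n; positivity
  have hinv : Filter.Tendsto (fun n : ℕ => (4*u) ^ n / ((n:ℝ)+1) ^ 2) Filter.atTop Filter.atTop := by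
    have : Filter.Tendsto (fun n : ℕ => ((n:ℝ)+1) ^ 2 / (4*u) ^ n) Filter.atTop
        (nhdsWithin 0 (Set.Ioi 0)) :=
      tendsto_nhdsWithin_of_tendsto_nhds_of_eventually_within _ hzero
        (Filter.Eventually.of_forall hpos)
    have := this.inv_tendsto_nhdsGT_zero
    convert this using 2 with n
    simp [div_eq_mul_inv, mul_comm]
  have := hinv.const_mul_atTop (show (0:ℝ) < u * R / 2 by positivity)
  apply this.congr
  intro n
  simp only [mul_pow]
  field_simp
  ring
end
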